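/- Let p be an odd prime, let h ∈ (ZMod p)[X] be irreducible with natDegree ≥ 1 and nonzero constant coefficient, let K = (ZMod p)[X] ⧸ span{h} with t̄ the residue class of X, and let z be a natural number. Let m₁₁, m₁₂, m₂₁, m₂₂ be integers with m₁₂ − m₂₁ = 1, and regard them as elements of K via the canonical map. Then the four equations in K: (t̄^z − 1)·m₁₁ = 0, t̄^z·(m₁₂ − 1) − m₁₂ = 0, t̄^z·(m₂₁ + 1) − m₂₁ = 0, (t̄^z − 1)·m₂₂ = 0 hold simultaneously if and only if m₁₁ ≡ 0 (mod p), m₂₂ ≡ 0 (mod p), 2·m₁₂ ≡ 1 (mod p), 2·m₂₁ ≡ −1 (mod p), and h divides 1 + X^z in (ZMod p)[X]. -/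

import Mathlib

open Polynomial

set_option maxHeartbeats 1000000

/-- Let `p` be an odd prime, `h` irreducible in `(ZMod p)[X]` with
`natDegree ≥ 1` and nonzero constant coefficient, `K = (ZMod p)[X] ⧸ span {h}` with `t̄` the
class of `X`, and `z : ℕ`. For integers `m₁₁, m₁₂, m₂₁, m₂₂` with `m₁₂ - m₂₁ = 1`, the four
equations `(t̄^z - 1)·m₁₁ = 0`, `t̄^z·(m₁₂ - 1) - m₁₂ = 0`, `t̄^z·(m₂₁ + 1) - m₂₁ = 0`,
`(t̄^z - 1)·m₂₂ = 0` hold in `K` iff `m₁₁ ≡ 0`, `m₂₂ ≡ 0`, `2m₁₂ ≡ 1`, `2m₂₁ ≡ -1 (mod p)`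
and `h ∣ 1 + X^z`. -/
theorem genus_one_maximal_coloring_iff (p : ℕ) (hp : p.Prime) (hodd : Odd p)
    (h : Polynomial (ZMod p)) (hirr : Irreducible h)
    (hdeg : 1 ≤ h.natDegree) (hc0 : h.coeff 0 ≠ 0)
    (z : ℕ) (m₁₁ m₁₂ m₂₁ m₂₂ : ℤ) (hm : m₁₂ - m₂₁ = 1) :
    (((Ideal.Quotient.mk (Ideal.span {h}) X) ^ z - 1) *
        (m₁₁ : Polynomial (ZMod p) ⧸ Ideal.span {h}) = 0 ∧
     (Ideal.Quotient.mk (Ideal.span {h}) X) ^ z *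
        ((m₁₂ : Polynomial (ZMod p) ⧸ Ideal.span {h}) - 1) -
        (m₁₂ : Polynomial (ZMod p) ⧸ Ideal.span {h}) = 0 ∧
     (Ideal.Quotient.mk (Ideal.span {h}) X) ^ z *
        ((m₂₁ : Polynomial (ZMod p) ⧸ Ideal.span {h}) + 1) -
        (m₂₁ : Polynomial (ZMod p) ⧸ Ideal.span {h}) = 0 ∧
     ((Ideal.Quotient.mk (Ideal.span {h}) X) ^ z - 1) *
        (m₂₂ : Polynomial (ZMod p) ⧸ Ideal.span {h}) = 0) ↔
    ((m₁₁ : ZMod p) = 0 ∧ (m₂₂ : ZMod p) = 0 ∧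
     ((2 * m₁₂ : ℤ) : ZMod p) = 1 ∧ ((2 * m₂₁ : ℤ) : ZMod p) = -1 ∧
     h ∣ (1 + X ^ z)) := by
  haveI hF : Fact p.Prime := ⟨hp⟩
  haveI hmax : (Ideal.span {h}).IsMaximal :=
    PrincipalIdealRing.isMaximal_of_irreducible hirr
  set K := Polynomial (ZMod p) ⧸ Ideal.span {h} with hK
  set f : ZMod p →+* K :=
    (Ideal.Quotient.mk (Ideal.span {h})).comp (C : ZMod p →+* Polynomial (ZMod p)) with hf
  letI : Field K := Ideal.Quotient.field _
  have hf_inj : Function.Injective f := f.injective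
  have hcast : ∀ m : ℤ, (m : K) = f ((m : ZMod p)) := fun m => (map_intCast f m).symm
  set T : K := (Ideal.Quotient.mk (Ideal.span {h}) X) ^ z with hT
  have h2 : (2 : ZMod p) ≠ 0 := by
    have : ((2 : ℕ) : ZMod p) ≠ 0 := by
      rw [Ne, ZMod.natCast_eq_zero_iff]
      intro hd
      have hp2 : p = 2 := (Nat.prime_dvd_prime_iff_eq hp Nat.prime_two).mp hd
      have := Nat.odd_iff.mp hodd
      omega
    simpa using this
  have h2K : (2 : K) ≠ 0 := by
    intro h0
    exact h2 (hf_inj (by rw [map_ofNat, map_zero]; exact h0))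
  have hdvd : (h ∣ 1 + X ^ z) ↔ T = -1 := by
    rw [← Ideal.Quotient.eq_zero_iff_dvd, map_add, map_one, map_pow, ← hT]
    constructor
    · intro hh; linear_combination hh
    · intro hh; linear_combination hh
  have hmK : (m₁₂ : K) - (m₂₁ : K) = 1 := by
    have := congrArg (fun n : ℤ => (n : K)) hm
    push_cast at this
    simpa using this
  constructor
  · rintro ⟨e1, e2, e3, e4⟩
    have hTneg : T = -1 := by
      linear_combination -e2 + e3 + (T - 1) * hmK
    have key : ∀ n : ℤ, ∀ c : ZMod p, (n : K) = f c → (n : ZMod p) = c := by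
      intro n c hc
      apply hf_inj
      rw [← hcast]; exact hc
    have h11 : (m₁₁ : K) = 0 := by
      have : (2 : K) * (m₁₁ : K) = 0 := by
        rw [hTneg] at e1; linear_combination -e1
      rcases mul_eq_zero.mp this with h' | h'
      · exact absurd h' h2K
      · exact h'
    have h22 : (m₂₂ : K) = 0 := by
      have : (2 : K) * (m₂₂ : K) = 0 := by
        rw [hTneg] at e4; linear_combination -e4
      rcases mul_eq_zero.mp this with h' | h'
      · exact absurd h' h2K
      · exact h'
    refine ⟨key m₁₁ 0 (by rw [map_zero]; exact h11),
      key m₂₂ 0 (by rw [map_zero]; exact h22), ?_, ?_, hdvd.mpr hTneg⟩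
    · apply key (2 * m₁₂) 1
      rw [map_one]
      push_cast
      rw [hTneg] at e2
      linear_combination -e2
    · apply key (2 * m₂₁) (-1)
      rw [map_neg, map_one]
      push_cast
      rw [hTneg] at e3
      linear_combination -e3
  · rintro ⟨h11, h22, h12, h21, hdv⟩
    have hTneg : T = -1 := hdvd.mp hdv
    have c11 : (m₁₁ : K) = 0 := by rw [hcast, h11, map_zero]
    have c22 : (m₂₂ : K) = 0 := by rw [hcast, h22, map_zero]
    have c12 : (2 : K) * (m₁₂ : K) = 1 := by
      have hh : ((2 * m₁₂ : ℤ) : K) = f 1 := by rw [hcast, h12]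
      rw [map_one] at hh
      push_cast at hh
      linear_combination hh
    have c21 : (2 : K) * (m₂₁ : K) = -1 := by
      have hh : ((2 * m₂₁ : ℤ) : K) = f (-1) := by rw [hcast, h21]
      rw [map_neg, map_one] at hh
      push_cast at hh
      linear_combination hh
    rw [hTneg]
    refine ⟨by rw [c11, mul_zero], ?_, ?_, by rw [c22, mul_zero]⟩
    · linear_combination -c12
    · linear_combination -c21
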